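/- arXiv:2012.13075 — 3 statements merged into one kernel-verified Lean document; each statement's English description precedes it below -/
import Mathlib

section
/- Let p ≥ 1 and let A be a p×p real matrix. The real vector space Sym_p of symmetric p×p real matrices (matrices X with Xᵀ = X) is invariant under the map X ↦ A X Aᵀ, and the determinant of the induced linear endomorphism of Sym_p equals (det A)^{p+1}. -/
open Matrix

def symMatrixSubmodule (p : ℕ) : Submodule ℝ (Matrix (Fin p) (Fin p) ℝ) where
  carrier := {X | Xᵀ = X}
  add_mem' := by
    intro X Y hX hY
    simp only [Set.mem_setOf_eq] at *
    rw [Matrix.transpose_add, hX, hY]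
  zero_mem' := by simp
  smul_mem' := by
    intro c X hX
    simp only [Set.mem_setOf_eq] at *
    rw [Matrix.transpose_smul, hX]

def congrByLinear (p : ℕ) (A : Matrix (Fin p) (Fin p) ℝ) :
    Matrix (Fin p) (Fin p) ℝ →ₗ[ℝ] Matrix (Fin p) (Fin p) ℝ where
  toFun X := A * X * Aᵀ
  map_add' X Y := by simp [Matrix.mul_add, Matrix.add_mul]
  map_smul' c X := by simp [Matrix.mul_smul, Matrix.smul_mul]

namespace SymDetAux

lemma mem_sym_iff {p : ℕ} (X : Matrix (Fin p) (Fin p) ℝ) :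
    X ∈ symMatrixSubmodule p ↔ Xᵀ = X := Iff.rfl

lemma symInv (p : ℕ) (A : Matrix (Fin p) (Fin p) ℝ) :
    ∀ X ∈ symMatrixSubmodule p, congrByLinear p A X ∈ symMatrixSubmodule p := by
  intro X hX
  rw [mem_sym_iff] at hX ⊢
  show (A * X * Aᵀ)ᵀ = A * X * Aᵀ
  rw [Matrix.transpose_mul, Matrix.transpose_mul, Matrix.transpose_transpose, hX,
    Matrix.mul_assoc]

noncomputable def F (p : ℕ) (A : Matrix (Fin p) (Fin p) ℝ) :
    symMatrixSubmodule p →ₗ[ℝ] symMatrixSubmodule p :=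
  (congrByLinear p A).restrict (symInv p A)

lemma F_coe {p : ℕ} (A : Matrix (Fin p) (Fin p) ℝ) (X : symMatrixSubmodule p) :
    (F p A X : Matrix (Fin p) (Fin p) ℝ) = A * (X : Matrix (Fin p) (Fin p) ℝ) * Aᵀ := rfl

lemma F_mul {p : ℕ} (A B : Matrix (Fin p) (Fin p) ℝ) :
    F p (A * B) = (F p A).comp (F p B) := by
  apply LinearMap.ext
  intro X
  apply Subtype.ext
  show (A * B) * (X : Matrix (Fin p) (Fin p) ℝ) * (A * B)ᵀ
      = A * (B * (X : Matrix (Fin p) (Fin p) ℝ) * Bᵀ) * Aᵀ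
  rw [Matrix.transpose_mul]
  noncomm_ring [Matrix.mul_assoc]

lemma F_one {p : ℕ} : F p (1 : Matrix (Fin p) (Fin p) ℝ) = LinearMap.id := by
  apply LinearMap.ext
  intro X
  apply Subtype.ext
  show (1 : Matrix (Fin p) (Fin p) ℝ) * (X : Matrix (Fin p) (Fin p) ℝ)
      * (1 : Matrix (Fin p) (Fin p) ℝ)ᵀ = (X : Matrix (Fin p) (Fin p) ℝ)
  simp

noncomputable def f (p : ℕ) (A : Matrix (Fin p) (Fin p) ℝ) : ℝ :=
  LinearMap.det (F p A)

lemma f_mul {p : ℕ} (A B : Matrix (Fin p) (Fin p) ℝ) :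
    f p (A * B) = f p A * f p B := by
  rw [f, f, f, F_mul, LinearMap.det_comp]

lemma f_one {p : ℕ} : f p (1 : Matrix (Fin p) (Fin p) ℝ) = 1 := by
  rw [f, F_one, LinearMap.det_id]

abbrev SymIdx (p : ℕ) := {ij : Fin p × Fin p // ij.1 ≤ ij.2}

noncomputable def symEquivFun (p : ℕ) : symMatrixSubmodule p ≃ₗ[ℝ] (SymIdx p → ℝ) where
  toFun X s := (X : Matrix (Fin p) (Fin p) ℝ) s.1.1 s.1.2
  map_add' X Y := rfl
  map_smul' c X := rfl
  invFun v := ⟨Matrix.of fun i j =>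
      if h : i ≤ j then v ⟨(i, j), h⟩ else v ⟨(j, i), le_of_not_ge h⟩, by
    rw [mem_sym_iff]
    ext i j
    simp only [Matrix.transpose_apply, Matrix.of_apply]
    by_cases h : i ≤ j
    · by_cases h' : j ≤ i
      · cases le_antisymm h h'; rfl
      · simp [h, h']
    · simp [h, le_of_not_ge h]⟩
  left_inv := by
    intro X
    apply Subtype.ext
    have hX : (X : Matrix (Fin p) (Fin p) ℝ)ᵀ = X := X.2
    ext i j
    simp only [Matrix.of_apply]
    by_cases h : i ≤ j
    · simp [h]
    · simp only [dif_neg h]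
      exact congrFun (congrFun hX i) j
  right_inv := by
    intro v
    funext s
    obtain ⟨⟨i, j⟩, hij⟩ := s
    simp [hij]

noncomputable def symBasis (p : ℕ) : Module.Basis (SymIdx p) ℝ (symMatrixSubmodule p) :=
  Module.Basis.ofEquivFun (symEquivFun p)

lemma symBasis_repr {p : ℕ} (Y : symMatrixSubmodule p) (s : SymIdx p) :
    (symBasis p).repr Y s = (symEquivFun p) Y s := by
  rw [symBasis, Module.Basis.ofEquivFun_repr_apply]

lemma prod_sym {p : ℕ} (d : Fin p → ℝ) :
    ∏ s : SymIdx p, (d s.1.1 * d s.1.2) = (∏ i, d i) ^ (p + 1) := by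
  classical
  have h1 : ∏ s : SymIdx p, (d s.1.1 * d s.1.2)
      = ∏ ij ∈ Finset.univ.filter (fun ij : Fin p × Fin p => ij.1 ≤ ij.2),
          d ij.1 * d ij.2 := by
    rw [Finset.prod_subtype (p := fun ij : Fin p × Fin p => ij.1 ≤ ij.2)
      (Finset.univ.filter (fun ij : Fin p × Fin p => ij.1 ≤ ij.2))
      (by intro x; simp) (fun ij => d ij.1 * d ij.2)]
  rw [h1, Finset.prod_filter, Fintype.prod_prod_type]
  have h2 : ∀ i : Fin p, (∏ j, if i ≤ j then d i * d j else 1)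
      = d i ^ (p - (i : ℕ)) * ∏ j ∈ Finset.Ici i, d j := by
    intro i
    rw [← Finset.prod_filter, Finset.filter_le_eq_Ici, Finset.prod_mul_distrib,
      Finset.prod_const, Fin.card_Ici]
  simp only [h2]
  rw [Finset.prod_mul_distrib]
  have h3 : (∏ i : Fin p, ∏ j ∈ Finset.Ici i, d j) = ∏ j : Fin p, d j ^ ((j : ℕ) + 1) := by
    rw [Finset.prod_comm' (s' := fun j => Finset.Iic j) (t' := Finset.univ)
      (by intro i j; simp)]
    apply Finset.prod_congr rfl
    intro j _
    rw [Finset.prod_const, Fin.card_Iic]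
  rw [h3, ← Finset.prod_mul_distrib, ← Finset.prod_pow]
  apply Finset.prod_congr rfl
  intro i _
  rw [← pow_add]
  congr 1
  have := i.isLt
  omega

lemma f_diagonal {p : ℕ} (d : Fin p → ℝ) :
    f p (Matrix.diagonal d) = (∏ i, d i) ^ (p + 1) := by
  classical
  rw [f, ← LinearMap.det_toMatrix (symBasis p)]
  have key : (LinearMap.toMatrix (symBasis p) (symBasis p)) (F p (Matrix.diagonal d))
      = Matrix.diagonal (fun s : SymIdx p => d s.1.1 * d s.1.2) := by
    ext s' s
    rw [LinearMap.toMatrix_apply, symBasis_repr]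
    have hcoe : (symEquivFun p) (F p (Matrix.diagonal d) ((symBasis p) s)) s'
        = d s'.1.1 * d s'.1.2 * ((symEquivFun p) ((symBasis p) s) s') := by
      show (Matrix.diagonal d * ((symBasis p) s : Matrix (Fin p) (Fin p) ℝ)
        * (Matrix.diagonal d)ᵀ) s'.1.1 s'.1.2 = _
      rw [Matrix.diagonal_transpose, Matrix.mul_diagonal, Matrix.diagonal_mul]
      have : (symEquivFun p) ((symBasis p) s) s'
          = ((symBasis p) s : Matrix (Fin p) (Fin p) ℝ) s'.1.1 s'.1.2 := rfl
      rw [this]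
      ring
    rw [hcoe]
    have hb : (symEquivFun p) ((symBasis p) s) s' = if s' = s then (1 : ℝ) else 0 := by
      rw [← symBasis_repr, Module.Basis.repr_self, Finsupp.single_apply]
      by_cases h : s' = s <;> simp [h, eq_comm]
    rw [hb, Matrix.diagonal_apply]
    by_cases h : s' = s <;> simp [h]
  rw [key, Matrix.det_diagonal, prod_sym]

lemma conj_transvection {p : ℕ} (i j : Fin p) (hij : i ≠ j) (c : ℝ) :
    Matrix.diagonal (fun k : Fin p => if k = i then (2:ℝ) else 1) * Matrix.transvection i j c
      * Matrix.diagonal (fun k : Fin p => if k = i then (1/2:ℝ) else 1)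
      = Matrix.transvection i j (c + c) := by
  classical
  have hji : ¬ j = i := fun h => hij h.symm
  have hij' : ¬ i = j := hij
  ext k l
  rw [Matrix.mul_diagonal, Matrix.diagonal_mul]
  simp only [Matrix.transvection, Matrix.add_apply, Matrix.smul_apply, smul_eq_mul,
    Matrix.one_apply, Matrix.single, Matrix.of_apply]
  by_cases hk : k = i <;> by_cases hl : l = i <;> by_cases hkl : k = l <;>
    by_cases hlj : l = j <;> simp_all [eq_comm] <;> ring

lemma f_transvection {p : ℕ} (i j : Fin p) (hij : i ≠ j) (c : ℝ) :
    f p (Matrix.transvection i j c) = 1 := by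
  classical
  have hunit : f p (Matrix.transvection i j c) * f p (Matrix.transvection i j (-c)) = 1 := by
    rw [← f_mul, Matrix.transvection_mul_transvection_same _ _ hij, add_neg_cancel,
      Matrix.transvection_zero, f_one]
  set D : Matrix (Fin p) (Fin p) ℝ := Matrix.diagonal (fun k => if k = i then 2 else 1) with hD
  set D' : Matrix (Fin p) (Fin p) ℝ :=
    Matrix.diagonal (fun k => if k = i then (1 / 2 : ℝ) else 1) with hD'
  have hDD' : D * D' = 1 := by
    rw [hD, hD', Matrix.diagonal_mul_diagonal]
    have : (fun k : Fin p => (if k = i then (2:ℝ) else 1) * (if k = i then (1/2:ℝ) else 1))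
        = fun _ => (1 : ℝ) := by
      funext k
      by_cases h : k = i <;> simp [h] <;> norm_num
    rw [this, Matrix.diagonal_one]
  have hconj : D * Matrix.transvection i j c * D' = Matrix.transvection i j (c + c) :=
    conj_transvection i j hij c
  have h2 : f p (Matrix.transvection i j (c + c))
      = f p (Matrix.transvection i j c) * f p (Matrix.transvection i j c) := by
    rw [← f_mul, Matrix.transvection_mul_transvection_same _ _ hij]
  have h3 : f p (Matrix.transvection i j (c + c))
      = f p D * f p (Matrix.transvection i j c) * f p D' := by
    rw [← hconj, f_mul, f_mul]
  have hD1 : f p D * f p D' = 1 := by rw [← f_mul, hDD', f_one]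
  have hsq : f p (Matrix.transvection i j c) * f p (Matrix.transvection i j c)
      = f p (Matrix.transvection i j c) := by
    rw [← h2, h3]
    calc f p D * f p (Matrix.transvection i j c) * f p D'
        = (f p D * f p D') * f p (Matrix.transvection i j c) := by ring
      _ = f p (Matrix.transvection i j c) := by rw [hD1, one_mul]
  have hne : f p (Matrix.transvection i j c) ≠ 0 := left_ne_zero_of_mul_eq_one hunit
  have := mul_left_cancel₀ hne (hsq.trans (mul_one _).symm)
  exact this

lemma f_zero_of_det_zero {p : ℕ} (A : Matrix (Fin p) (Fin p) ℝ) (hA : A.det = 0) :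
    f p A = 0 := by
  classical
  obtain ⟨v, hv, hAv⟩ := (Matrix.exists_mulVec_eq_zero_iff).2 hA
  set X : Matrix (Fin p) (Fin p) ℝ := Matrix.vecMulVec v v with hXdef
  have hXsym : X ∈ symMatrixSubmodule p := by
    rw [mem_sym_iff]
    ext a b
    simp [hXdef, Matrix.vecMulVec_apply, mul_comm]
  have hXne : (⟨X, hXsym⟩ : symMatrixSubmodule p) ≠ 0 := by
    intro h
    apply hv
    have hX0 : X = 0 := congrArg Subtype.val h
    funext a
    have hsq : v a * v a = 0 := by
      have := congrFun (congrFun hX0 a) a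
      simpa [hXdef, Matrix.vecMulVec_apply] using this
    simpa using mul_self_eq_zero.mp hsq
  have hFX : F p A ⟨X, hXsym⟩ = 0 := by
    apply Subtype.ext
    rw [F_coe]
    show A * X * Aᵀ = 0
    ext a b
    simp only [Matrix.mul_apply, Matrix.transpose_apply, hXdef, Matrix.vecMulVec_apply,
      Matrix.zero_apply]
    have key : ∀ l, (∑ k, A a k * (v k * v l)) * A b l = (A.mulVec v a) * (v l * A b l) := by
      intro l
      rw [Matrix.mulVec, dotProduct]
      rw [Finset.sum_mul, Finset.sum_mul]
      apply Finset.sum_congr rfl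
      intro k _
      ring
    calc ∑ l, (∑ k, A a k * (v k * v l)) * A b l
        = ∑ l, (A.mulVec v a) * (v l * A b l) := Finset.sum_congr rfl (fun l _ => key l)
      _ = (A.mulVec v a) * ∑ l, v l * A b l := by rw [Finset.mul_sum]
      _ = 0 := by
          have h0 : A.mulVec v a = 0 := by rw [hAv]; rfl
          rw [h0, zero_mul]
  rw [f, ← LinearMap.det_toMatrix (symBasis p)]
  apply Matrix.exists_mulVec_eq_zero_iff.mp
  refine ⟨((symBasis p).repr ⟨X, hXsym⟩ : SymIdx p →₀ ℝ), ?_, ?_⟩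
  · intro h0
    apply hXne
    have : (symBasis p).repr ⟨X, hXsym⟩ = 0 := DFunLike.coe_injective h0
    exact ((symBasis p).repr.map_eq_zero_iff).mp this
  · rw [LinearMap.toMatrix_mulVec_repr, hFX]
    simp

end SymDetAux

open SymDetAux in
/-- The space of symmetric `p × p` real matrices is invariant under the congruence map
`X ↦ A X Aᵀ`, and the determinant of the induced linear endomorphism of this space is
`(det A)^(p+1)`. -/
theorem det_congr_restrict_symMatrix (p : ℕ) (hp : 1 ≤ p) (A : Matrix (Fin p) (Fin p) ℝ) :
    ∃ hinv : ∀ X ∈ symMatrixSubmodule p, congrByLinear p A X ∈ symMatrixSubmodule p,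
      LinearMap.det ((congrByLinear p A).restrict hinv) = A.det ^ (p + 1) := by
  refine ⟨symInv p A, ?_⟩
  show f p A = A.det ^ (p + 1)
  by_cases hdet : A.det = 0
  · rw [f_zero_of_det_zero A hdet, hdet, zero_pow (Nat.succ_ne_zero p)]
  · apply Matrix.diagonal_transvection_induction_of_det_ne_zero
      (fun M => f p M = M.det ^ (p + 1)) A hdet
    · intro d _
      rw [f_diagonal, Matrix.det_diagonal]
    · intro t
      rcases t with ⟨ti, tj, htij, tc⟩
      rw [Matrix.TransvectionStruct.toMatrix_mk, Matrix.det_transvection_of_ne _ _ htij,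
        one_pow]
      exact f_transvection _ _ htij tc
    · intro M N hM hN hPM hPN
      rw [f_mul, hPM, hPN, Matrix.det_mul, mul_pow]
end

section
/- Generic ascent property of the EM algorithm: let (𝒵, 𝒜, ν) be a σ-finite measure space and let f₁, f₂ : 𝒵 → ℝ be measurable with f₁ ≥ 0 and f₂ ≥ 0, set L₁ = ∫ f₁ dν and L₂ = ∫ f₂ dν, and assume 0 < L₁ < ∞, 0 < L₂ < ∞, that f₁ > 0 and f₂ > 0 hold ν-almost everywhere, and that the functions z ↦ (f₁(z)/L₁)·log f₁(z) and z ↦ (f₁(z)/L₁)·log f₂(z) are ν-integrable. Define Q(f | f₁) = ∫ (f₁(z)/L₁)·log f(z) dν(z). If Q(f₂ | f₁) ≥ Q(f₁ | f₁), then L₂ ≥ L₁. -/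
open MeasureTheory Real

/-- Generic ascent property of the EM algorithm: if `f₁, f₂ ≥ 0` are measurable with
integrals `L₁ = ∫ f₁ dν` and `L₂ = ∫ f₂ dν` positive and finite, `f₁, f₂ > 0` a.e., and the
EM objective `Q(f | f₁) = ∫ (f₁/L₁) log f dν` (with both integrands integrable) satisfies
`Q(f₂ | f₁) ≥ Q(f₁ | f₁)`, then `L₂ ≥ L₁`. -/
theorem em_ascent {Z : Type*} [MeasurableSpace Z] (ν : Measure Z) [SigmaFinite ν]
    (f₁ f₂ : Z → ℝ) (hm₁ : Measurable f₁) (hm₂ : Measurable f₂)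
    (hnn₁ : ∀ z, 0 ≤ f₁ z) (hnn₂ : ∀ z, 0 ≤ f₂ z)
    (hint₁ : Integrable f₁ ν) (hint₂ : Integrable f₂ ν)
    (hL₁ : 0 < ∫ z, f₁ z ∂ν) (hL₂ : 0 < ∫ z, f₂ z ∂ν)
    (hpos₁ : ∀ᵐ z ∂ν, 0 < f₁ z) (hpos₂ : ∀ᵐ z ∂ν, 0 < f₂ z)
    (hQ₁ : Integrable (fun z => f₁ z / (∫ z', f₁ z' ∂ν) * Real.log (f₁ z)) ν)
    (hQ₂ : Integrable (fun z => f₁ z / (∫ z', f₁ z' ∂ν) * Real.log (f₂ z)) ν)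
    (hQ : ∫ z, f₁ z / (∫ z', f₁ z' ∂ν) * Real.log (f₁ z) ∂ν
        ≤ ∫ z, f₁ z / (∫ z', f₁ z' ∂ν) * Real.log (f₂ z) ∂ν) :
    ∫ z, f₁ z ∂ν ≤ ∫ z, f₂ z ∂ν := by
  set L₁ := ∫ z, f₁ z ∂ν with hL₁def
  have hL₁ne : L₁ ≠ 0 := ne_of_gt hL₁
  have hgint : Integrable (fun z => f₁ z / L₁ * (Real.log (f₂ z) - Real.log (f₁ z))) ν := by
    simpa [mul_sub, Pi.sub_def] using hQ₂.sub hQ₁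
  have hhint : Integrable (fun z => (f₂ z - f₁ z) / L₁) ν := (hint₂.sub hint₁).div_const L₁
  have hmono : ∀ᵐ z ∂ν, f₁ z / L₁ * (Real.log (f₂ z) - Real.log (f₁ z)) ≤ (f₂ z - f₁ z) / L₁ := by
    filter_upwards [hpos₁, hpos₂] with z h1 h2
    have hlog : Real.log (f₂ z) - Real.log (f₁ z) = Real.log (f₂ z / f₁ z) :=
      (Real.log_div (ne_of_gt h2) (ne_of_gt h1)).symm
    rw [hlog]
    have hle : Real.log (f₂ z / f₁ z) ≤ f₂ z / f₁ z - 1 :=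
      Real.log_le_sub_one_of_pos (div_pos h2 h1)
    have hmul := mul_le_mul_of_nonneg_left hle (div_nonneg (hnn₁ z) hL₁.le)
    calc f₁ z / L₁ * Real.log (f₂ z / f₁ z) ≤ f₁ z / L₁ * (f₂ z / f₁ z - 1) := hmul
      _ = (f₂ z - f₁ z) / L₁ := by
          field_simp
  have key : ∫ z, f₁ z / L₁ * (Real.log (f₂ z) - Real.log (f₁ z)) ∂ν
      ≤ ∫ z, (f₂ z - f₁ z) / L₁ ∂ν := integral_mono_ae hgint hhint hmono
  have h0 : 0 ≤ ∫ z, f₁ z / L₁ * (Real.log (f₂ z) - Real.log (f₁ z)) ∂ν := by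
    have : ∫ z, f₁ z / L₁ * (Real.log (f₂ z) - Real.log (f₁ z)) ∂ν
        = (∫ z, f₁ z / L₁ * Real.log (f₂ z) ∂ν) - ∫ z, f₁ z / L₁ * Real.log (f₁ z) ∂ν := by
      simp_rw [mul_sub]
      exact integral_sub hQ₂ hQ₁
    rw [this]
    linarith
  have hrhs : ∫ z, (f₂ z - f₁ z) / L₁ ∂ν = ((∫ z, f₂ z ∂ν) - L₁) / L₁ := by
    rw [integral_div, integral_sub hint₂ hint₁]
  rw [hrhs] at key
  have h2 : 0 ≤ ((∫ z, f₂ z ∂ν) - L₁) / L₁ := le_trans h0 key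
  have := (div_nonneg_iff.mp h2)
  rcases this with ⟨hnum, _⟩ | ⟨_, hden⟩
  · linarith
  · linarith
end

section
/- Let ρ ∈ (−1, 1) and let (X, Y) be a random vector on a standard Borel probability space whose joint law is the multivariate Gaussian on ℝ² with mean 0 and covariance [[1, ρ],[ρ, 1]]. Then the conditional distribution of X given Y is Gaussian with mean ρ·y and variance 1 − ρ²: for (law of Y)-almost every y, condDistrib X Y ℙ y = gaussianReal (ρ·y) (1 − ρ²). -/
open MeasureTheory ProbabilityTheory Matrix
open scoped ENNReal NNReal Real

/-- The space of real matrices, equipped with the product measurable structure. -/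
instance matrixMeasurableSpace {m n : Type*} : MeasurableSpace (Matrix m n ℝ) :=
  inferInstanceAs (MeasurableSpace (m → n → ℝ))

/-- Square root of a positive semidefinite matrix, as defined in the older Mathlib
(`Matrix.PosSemidef.sqrt`, removed since). -/
noncomputable def Matrix.PosSemidef.sqrt {n : Type*} [Fintype n] [DecidableEq n]
    {A : Matrix n n ℝ} (hA : A.PosSemidef) : Matrix n n ℝ :=
  (hA.1.eigenvectorUnitary : Matrix n n ℝ) * diagonal ((↑) ∘ (Real.sqrt ∘ hA.1.eigenvalues)) *
    (star (hA.1.eigenvectorUnitary : Matrix n n ℝ))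

/-- The multivariate Gaussian measure `N(μ, S)` on `EuclideanSpace ℝ ι` with mean `μ` and
(positive semidefinite) covariance matrix `S`: the pushforward of the standard Gaussian
product measure under `x ↦ μ + √S x`. -/
noncomputable def multivariateGaussian {ι : Type*} [Fintype ι] [DecidableEq ι]
    (μ : EuclideanSpace ℝ ι) (S : Matrix ι ι ℝ) (hS : S.PosSemidef) :
    Measure (EuclideanSpace ℝ ι) :=
  Measure.map (fun x => μ + Matrix.toEuclideanLin hS.sqrt x)
    (Measure.map (MeasurableEquiv.toLp 2 (ι → ℝ))
      (Measure.pi fun _ : ι => gaussianReal 0 1))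

/-- The parameterized Wishart distribution `W_p(S, M)`: the law of `(1/M) ∑_{j=1}^M Z_j Z_jᵀ`
where `Z_1, …, Z_M` are i.i.d. `N(0, S)` random vectors in `ℝ^p`, i.e. the pushforward of the
`M`-fold product of `N(0, S)` under `(z_1, …, z_M) ↦ (1/M) ∑_j z_j z_jᵀ`. -/
noncomputable def wishart (p M : ℕ) (S : Matrix (Fin p) (Fin p) ℝ) (hS : S.PosSemidef) :
    Measure (Matrix (Fin p) (Fin p) ℝ) :=
  Measure.map
    (fun z : Fin M → EuclideanSpace ℝ (Fin p) =>
      (M : ℝ)⁻¹ • ∑ j : Fin M, Matrix.of (fun i k => z j i * z j k))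
    (Measure.pi fun _ : Fin M => multivariateGaussian 0 S hS)

namespace BivariateGaussianAux

lemma sqrt_mul_self' {n : Type*} [Fintype n] [DecidableEq n] {A : Matrix n n ℝ}
    (hA : A.PosSemidef) : hA.sqrt * hA.sqrt = A := by
  have hU : star (hA.1.eigenvectorUnitary : Matrix n n ℝ) * (hA.1.eigenvectorUnitary : Matrix n n ℝ) = 1 :=
    Unitary.coe_star_mul_self _
  conv_rhs => rw [hA.1.spectral_theorem, Unitary.conjStarAlgAut_apply]
  simp only [Matrix.PosSemidef.sqrt]
  rw [show ∀ a b c d e f : Matrix n n ℝ, a * b * c * (d * e * f) = a * b * (c * d) * e * f by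
    intros; simp only [Matrix.mul_assoc], hU, Matrix.mul_one, Matrix.mul_assoc _ (diagonal _) (diagonal _),
    Matrix.diagonal_mul_diagonal]
  congr 2
  congr 1
  funext i
  simp [Real.mul_self_sqrt (hA.eigenvalues_nonneg i)]

lemma sqrt_isHermitian' {n : Type*} [Fintype n] [DecidableEq n] {A : Matrix n n ℝ}
    (hA : A.PosSemidef) : hA.sqrt.IsHermitian := by
  simp only [Matrix.IsHermitian, Matrix.PosSemidef.sqrt, Matrix.conjTranspose_mul,
    Matrix.diagonal_conjTranspose, Matrix.star_eq_conjTranspose, Matrix.conjTranspose_conjTranspose,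
    Matrix.mul_assoc]
  congr 3

/-- The density of the 2-dimensional standard Gaussian. -/
noncomputable def stdDens2 : (Fin 2 → ℝ) → ℝ≥0∞ :=
  fun x => gaussianPDF 0 1 (x 0) * gaussianPDF 0 1 (x 1)

lemma measurable_stdDens2 : Measurable stdDens2 :=
  ((measurable_gaussianPDF 0 1).comp (measurable_pi_apply 0)).mul
    ((measurable_gaussianPDF 0 1).comp (measurable_pi_apply 1))

lemma gaussianPDF_zero_one_mul (u v : ℝ) :
    gaussianPDF 0 1 u * gaussianPDF 0 1 v
      = ENNReal.ofReal ((2 * Real.pi)⁻¹ * Real.exp (-(u ^ 2 + v ^ 2) / 2)) := by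
  have h2π : (0 : ℝ) < 2 * Real.pi := by positivity
  have hs : Real.sqrt (2 * Real.pi) * Real.sqrt (2 * Real.pi) = 2 * Real.pi :=
    Real.mul_self_sqrt h2π.le
  rw [gaussianPDF, gaussianPDF, ← ENNReal.ofReal_mul (gaussianPDFReal_nonneg _ _ _)]
  congr 1
  simp only [gaussianPDFReal, NNReal.coe_one, mul_one, sub_zero]
  rw [show (√(2*π))⁻¹ * Real.exp (-u ^ 2 / 2) * ((√(2*π))⁻¹ * Real.exp (-v ^ 2 / 2))
      = (√(2*π) * √(2*π))⁻¹ * (Real.exp (-u ^ 2 / 2) * Real.exp (-v ^ 2 / 2)) by ring,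
    hs, ← Real.exp_add]
  ring_nf

/-- The two-dimensional standard Gaussian as a measure with density w.r.t. Lebesgue. -/
lemma pi_gauss_eq_withDensity :
    (Measure.pi fun _ : Fin 2 => gaussianReal 0 1)
      = (volume : Measure (Fin 2 → ℝ)).withDensity stdDens2 := by
  refine ((Measure.pi_eq (μ := fun _ : Fin 2 => gaussianReal 0 1) fun s hs => ?_))
  rw [withDensity_apply _ (MeasurableSet.univ_pi hs)]
  have hpre : Set.pi Set.univ s
      = (MeasurableEquiv.piFinTwo (fun _ => ℝ)) ⁻¹' (s 0 ×ˢ s 1) := by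
    ext x
    simp [Fin.forall_fin_two, MeasurableEquiv.piFinTwo_apply]
  have hG : Measurable fun p : ℝ × ℝ => gaussianPDF 0 1 p.1 * gaussianPDF 0 1 p.2 :=
    ((measurable_gaussianPDF 0 1).comp measurable_fst).mul
      ((measurable_gaussianPDF 0 1).comp measurable_snd)
  have hmap : Measure.map (MeasurableEquiv.piFinTwo (fun _ => ℝ))
      (volume : Measure (Fin 2 → ℝ)) = (volume : Measure ℝ).prod volume :=
    (measurePreserving_piFinTwo fun _ => (volume : Measure ℝ)).map_eq
  calc ∫⁻ x in Set.pi Set.univ s, stdDens2 x ∂volume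
      = ∫⁻ x in (MeasurableEquiv.piFinTwo (fun _ => ℝ)) ⁻¹' (s 0 ×ˢ s 1),
          (fun p : ℝ × ℝ => gaussianPDF 0 1 p.1 * gaussianPDF 0 1 p.2)
            ((MeasurableEquiv.piFinTwo (fun _ => ℝ)) x) ∂volume := by rw [hpre]; rfl
    _ = ∫⁻ p in s 0 ×ˢ s 1, gaussianPDF 0 1 p.1 * gaussianPDF 0 1 p.2
          ∂((volume : Measure ℝ).prod volume) := by
        rw [← hmap, setLIntegral_map ((hs 0).prod (hs 1)) hG
          (MeasurableEquiv.piFinTwo (fun _ => ℝ)).measurable]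
    _ = (∫⁻ x in s 0, gaussianPDF 0 1 x) * ∫⁻ x in s 1, gaussianPDF 0 1 x := by
        rw [← Measure.prod_restrict, lintegral_prod_mul
          (measurable_gaussianPDF 0 1).aemeasurable (measurable_gaussianPDF 0 1).aemeasurable]
    _ = ∏ i : Fin 2, gaussianReal 0 1 (s i) := by
        rw [Fin.prod_univ_two, gaussianReal_apply 0 one_ne_zero, gaussianReal_apply 0 one_ne_zero]

/-- The two-dimensional standard Gaussian is invariant under orthogonal transformations. -/
lemma map_mulVec_pi_gauss {M : Matrix (Fin 2) (Fin 2) ℝ} (hM : Mᵀ * M = 1) :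
    Measure.map (fun x => M.mulVec x) (Measure.pi fun _ : Fin 2 => gaussianReal 0 1)
      = Measure.pi fun _ : Fin 2 => gaussianReal 0 1 := by
  have hdet2 : M.det ^ 2 = 1 := by
    have := congrArg Matrix.det hM
    rwa [Matrix.det_mul, Matrix.det_transpose, Matrix.det_one, ← pow_two] at this
  have hdet0 : M.det ≠ 0 := by
    intro h; rw [h] at hdet2; norm_num at hdet2
  have habs : |M.det| = 1 := by
    nlinarith [sq_abs M.det, abs_nonneg M.det, hdet2]
  have hTmeas : Measurable (fun x : Fin 2 → ℝ => M.mulVec x) := by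
    have : (fun x : Fin 2 → ℝ => M.mulVec x) = ⇑(Matrix.toLin' M) := by
      ext x i; rw [Matrix.toLin'_apply]
    rw [this]
    exact (LinearMap.continuous_on_pi _).measurable
  have hvol : Measure.map (fun x : Fin 2 → ℝ => M.mulVec x) volume = volume := by
    have h := Real.map_matrix_volume_pi_eq_smul_volume_pi hdet0
    have he : (fun x : Fin 2 → ℝ => M.mulVec x) = ⇑(Matrix.toLin' M) := by
      ext x i; rw [Matrix.toLin'_apply]
    rw [he, h, abs_inv, habs]
    norm_num
  have h00 := congrFun (congrFun hM 0) 0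
  have h01 := congrFun (congrFun hM 0) 1
  have h11 := congrFun (congrFun hM 1) 1
  simp only [Matrix.mul_apply, Matrix.transpose_apply, Fin.sum_univ_two, Matrix.one_apply_eq,
    Matrix.one_apply_ne, ne_eq, Fin.zero_eq_one_iff, OfNat.ofNat_ne_one, not_false_eq_true,
    one_ne_zero, Fin.one_eq_zero_iff] at h00 h01 h11
  have hnorm : ∀ x : Fin 2 → ℝ,
      (M.mulVec x 0) ^ 2 + (M.mulVec x 1) ^ 2 = (x 0) ^ 2 + (x 1) ^ 2 := by
    intro x
    simp only [Matrix.mulVec, dotProduct, Fin.sum_univ_two]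
    linear_combination (x 0) ^ 2 * h00 + (x 1) ^ 2 * h11 + 2 * (x 0) * (x 1) * h01
  have hF : ∀ x : Fin 2 → ℝ, stdDens2 (M.mulVec x) = stdDens2 x := by
    intro x
    simp only [stdDens2, gaussianPDF_zero_one_mul, hnorm x]
  ext s hs
  rw [Measure.map_apply hTmeas hs, pi_gauss_eq_withDensity,
    withDensity_apply _ (hTmeas hs), withDensity_apply _ hs]
  calc ∫⁻ x in (fun x => M.mulVec x) ⁻¹' s, stdDens2 x ∂volume
      = ∫⁻ x in (fun x => M.mulVec x) ⁻¹' s, stdDens2 (M.mulVec x) ∂volume :=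
        setLIntegral_congr_fun (hTmeas hs) (fun x _ => (hF x).symm)
    _ = ∫⁻ y in s, stdDens2 y ∂(Measure.map (fun x => M.mulVec x) volume) :=
        (setLIntegral_map hs measurable_stdDens2 hTmeas).symm
    _ = ∫⁻ y in s, stdDens2 y ∂volume := by rw [hvol]

lemma measurable_gaussianReal_comp {v : ℝ≥0} (hv : v ≠ 0) (ρ : ℝ) :
    Measurable fun y : ℝ => gaussianReal (ρ * y) v := by
  refine Measure.measurable_of_measurable_coe _ fun s hs => ?_
  simp_rw [gaussianReal_apply _ hv s]
  exact Measurable.lintegral_prod_right'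
    (f := fun p : ℝ × ℝ => gaussianPDF (ρ * p.1) v p.2) <| by
      unfold gaussianPDF gaussianPDFReal
      fun_prop

/-- The conditional Gaussian kernel `y ↦ N(ρ y, v)`. -/
noncomputable def gaussKer (ρ : ℝ) {v : ℝ≥0} (hv : v ≠ 0) : Kernel ℝ ℝ where
  toFun := fun y => gaussianReal (ρ * y) v
  measurable' := measurable_gaussianReal_comp hv ρ

lemma gaussKer_apply (ρ : ℝ) {v : ℝ≥0} (hv : v ≠ 0) (y : ℝ) :
    gaussKer ρ hv y = gaussianReal (ρ * y) v := rfl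

instance (ρ : ℝ) {v : ℝ≥0} (hv : v ≠ 0) : IsMarkovKernel (gaussKer ρ hv) :=
  ⟨fun _ => by rw [gaussKer_apply]; infer_instance⟩

lemma gaussianReal_map_affine (ρ σ u : ℝ) :
    Measure.map (fun x : ℝ => ρ * u + σ * x) (gaussianReal 0 1)
      = gaussianReal (ρ * u) (NNReal.mk (σ ^ 2) (sq_nonneg _) * 1) := by
  have h1 : (fun x : ℝ => ρ * u + σ * x) = (fun x => ρ * u + x) ∘ (fun x => σ * x) := rfl
  rw [h1, ← Measure.map_map (by fun_prop) (by fun_prop), gaussianReal_map_const_mul σ,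
    gaussianReal_map_const_add, mul_zero, zero_add]

/-- Disintegration of the image of a product of standard Gaussians by the affine map
`(u, x) ↦ (u, ρ u + σ x)`. -/
lemma map_affine_prod_eq_compProd {ρ σ : ℝ} {v : ℝ≥0} (hv : v ≠ 0)
    (hσv : NNReal.mk (σ ^ 2) (sq_nonneg _) * 1 = v) :
    Measure.map (fun p : ℝ × ℝ => (p.1, ρ * p.1 + σ * p.2))
        ((gaussianReal 0 1).prod (gaussianReal 0 1))
      = (gaussianReal 0 1) ⊗ₘ gaussKer ρ hv := by
  classical
  have hmeas : Measurable fun p : ℝ × ℝ => (p.1, ρ * p.1 + σ * p.2) := by fun_prop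
  haveI := Measure.isProbabilityMeasure_map (μ := (gaussianReal 0 1).prod (gaussianReal 0 1))
    hmeas.aemeasurable
  refine ext_of_generate_finite _ generateFrom_prod.symm isPiSystem_prod ?_ ?_
  · rintro _ ⟨s, hs, t, ht, rfl⟩
    simp only [Set.mem_setOf_eq] at hs ht
    rw [Measure.map_apply hmeas (hs.prod ht), Measure.compProd_apply_prod hs ht]
    rw [Measure.prod_apply (hmeas (hs.prod ht))]
    have hker : ∀ u : ℝ, Prod.mk u ⁻¹'
          ((fun p : ℝ × ℝ => (p.1, ρ * p.1 + σ * p.2)) ⁻¹' s ×ˢ t)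
        = if u ∈ s then ((fun x => ρ * u + σ * x) ⁻¹' t) else ∅ := by
      intro u; ext x
      by_cases hu : u ∈ s <;> simp [hu]
    calc ∫⁻ u, (gaussianReal 0 1) (Prod.mk u ⁻¹'
          ((fun p : ℝ × ℝ => (p.1, ρ * p.1 + σ * p.2)) ⁻¹' s ×ˢ t)) ∂(gaussianReal 0 1)
        = ∫⁻ u, s.indicator (fun u => (gaussKer ρ hv) u t) u ∂(gaussianReal 0 1) := by
          congr 1; ext u
          rw [hker u]
          by_cases hu : u ∈ s
          · simp only [hu, if_true, Set.indicator_of_mem hu]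
            rw [gaussKer_apply, ← hσv, ← gaussianReal_map_affine ρ σ u,
              Measure.map_apply (by fun_prop) ht]
          · simp [hu]
      _ = ∫⁻ u in s, (gaussKer ρ hv) u t ∂(gaussianReal 0 1) := by
          rw [lintegral_indicator hs]
  · rw [measure_univ, Measure.compProd_apply_univ, measure_univ]

end BivariateGaussianAux

open BivariateGaussianAux in
/-- For a centered bivariate Gaussian vector `(X, Y)` with covariance `[[1, ρ], [ρ, 1]]` on a
standard Borel probability space, the conditional distribution of `X` given `Y` is Gaussian
with mean `ρ·y` and variance `1 − ρ²`: for `(law of Y)`-a.e. `y`,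
`condDistrib X Y ℙ y = gaussianReal (ρ·y) (1 − ρ²)`. -/
theorem condDistrib_bivariate_gaussian
    {Ω : Type*} [MeasurableSpace Ω] [StandardBorelSpace Ω]
    (P : Measure Ω) [IsProbabilityMeasure P]
    (ρ : ℝ) (hρ : ρ ∈ Set.Ioo (-1 : ℝ) 1)
    (hC : (!![1, ρ; ρ, 1] : Matrix (Fin 2) (Fin 2) ℝ).PosSemidef)
    (W : Ω → EuclideanSpace ℝ (Fin 2)) (hW : Measurable W)
    (hlaw : Measure.map W P = multivariateGaussian 0 !![1, ρ; ρ, 1] hC)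
    (X Y : Ω → ℝ) (hX : X = fun ω => W ω 0) (hY : Y = fun ω => W ω 1) :
    ∀ᵐ y ∂(Measure.map Y P),
      condDistrib X Y P y = gaussianReal (ρ * y) (Real.toNNReal (1 - ρ ^ 2)) := by
  subst hX hY
  obtain ⟨hρ1, hρ2⟩ := hρ
  have h1ρ : 0 < 1 - ρ ^ 2 := by nlinarith
  set σ : ℝ := Real.sqrt (1 - ρ ^ 2) with hσdef
  have hσpos : 0 < σ := Real.sqrt_pos.mpr h1ρ
  have hσ2 : σ ^ 2 = 1 - ρ ^ 2 := Real.sq_sqrt h1ρ.le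
  have hv : Real.toNNReal (1 - ρ ^ 2) ≠ 0 := by
    simp only [ne_eq, Real.toNNReal_eq_zero, not_le]
    linarith
  have hσv : NNReal.mk (σ ^ 2) (sq_nonneg _) * 1 = Real.toNNReal (1 - ρ ^ 2) := by
    ext
    simp [hσ2, Real.coe_toNNReal _ h1ρ.le]
  set B : Matrix (Fin 2) (Fin 2) ℝ := hC.sqrt with hBdef
  have hBsq : B * B = !![1, ρ; ρ, 1] := by
    rw [hBdef]; exact sqrt_mul_self' hC
  have hBsym : B 1 0 = B 0 1 := by
    have h := sqrt_isHermitian' hC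
    have := congrFun (congrFun h 1) 0
    simpa [Matrix.conjTranspose_apply] using this.symm
  have e00 := congrFun (congrFun hBsq 0) 0
  have e01 := congrFun (congrFun hBsq 0) 1
  have e11 := congrFun (congrFun hBsq 1) 1
  simp only [Matrix.mul_apply, Fin.sum_univ_two, hBsym, Matrix.of_apply, Matrix.cons_val',
    Matrix.cons_val_zero, Matrix.cons_val_one, Matrix.head_cons, Matrix.empty_val',
    Matrix.cons_val_fin_one, Matrix.head_fin_const] at e00 e01 e11
  set p : ℝ := B 0 0
  set q : ℝ := B 0 1
  set s : ℝ := B 1 1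
  -- the orthogonal matrix relating `(Y, (X - ρ Y)/σ)` to the underlying standard Gaussian
  set R : Matrix (Fin 2) (Fin 2) ℝ :=
    !![q, s; (p - ρ * q) / σ, (q - ρ * s) / σ] with hRdef
  have hRRt : R * Rᵀ = 1 := by
    ext i j
    fin_cases i <;> fin_cases j <;>
      simp only [hRdef, Matrix.mul_apply, Matrix.transpose_apply, Fin.sum_univ_two,
        Matrix.of_apply, Matrix.cons_val', Matrix.cons_val_zero, Matrix.cons_val_one,
        Matrix.head_cons, Matrix.empty_val', Matrix.cons_val_fin_one, Matrix.head_fin_const,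
        Matrix.one_apply] <;> norm_num
    · linear_combination e11
    · field_simp
      linear_combination e01 - ρ * e11
    · field_simp
      linear_combination e01 - ρ * e11
    · field_simp
      linear_combination e00 - 2 * ρ * e01 + ρ ^ 2 * e11 - hσ2
  have hR : Rᵀ * R = 1 := mul_eq_one_comm.mp hRRt
  -- notation
  set ν : Measure (Fin 2 → ℝ) := Measure.pi fun _ : Fin 2 => gaussianReal 0 1 with hνdef
  set e2 : (Fin 2 → ℝ) ≃ᵐ ℝ × ℝ := MeasurableEquiv.piFinTwo fun _ => ℝ with he2def
  -- the affine map on ℝ × ℝ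
  set h' : ℝ × ℝ → ℝ × ℝ := fun pr => (pr.1, ρ * pr.1 + σ * pr.2) with hh'def
  have hh'meas : Measurable h' := by rw [hh'def]; fun_prop
  have hRmeas : Measurable fun x : Fin 2 → ℝ => R.mulVec x := by
    have : (fun x : Fin 2 → ℝ => R.mulVec x) = ⇑(Matrix.toLin' R) := by
      ext x i; rw [Matrix.toLin'_apply]
    rw [this]
    exact (LinearMap.continuous_on_pi _).measurable
  have hcoord : Measurable fun w : EuclideanSpace ℝ (Fin 2) => (w 1, w 0) :=
    Measurable.prodMk
      ((measurable_pi_apply 1).comp (MeasurableEquiv.toLp 2 (Fin 2 → ℝ)).symm.measurable)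
      ((measurable_pi_apply 0).comp (MeasurableEquiv.toLp 2 (Fin 2 → ℝ)).symm.measurable)
  have hAmeas : Measurable fun x : EuclideanSpace ℝ (Fin 2) =>
      (0 : EuclideanSpace ℝ (Fin 2)) + Matrix.toEuclideanLin B x := by
    have hc : Continuous (Matrix.toEuclideanLin B) :=
      LinearMap.continuous_of_finiteDimensional _
    exact (continuous_const.add hc).measurable
  have hXmeas : Measurable fun ω => W ω 0 :=
    ((measurable_pi_apply 0).comp (MeasurableEquiv.toLp 2 (Fin 2 → ℝ)).symm.measurable).comp hW
  have hYmeas : Measurable fun ω => W ω 1 :=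
    ((measurable_pi_apply 1).comp (MeasurableEquiv.toLp 2 (Fin 2 → ℝ)).symm.measurable).comp hW
  -- the key function identity
  have hcomp : (fun w : EuclideanSpace ℝ (Fin 2) => (w 1, w 0))
        ∘ ((fun x : EuclideanSpace ℝ (Fin 2) =>
            (0 : EuclideanSpace ℝ (Fin 2)) + Matrix.toEuclideanLin B x)
          ∘ ⇑(MeasurableEquiv.toLp 2 (Fin 2 → ℝ)))
      = h' ∘ (⇑e2 ∘ fun x : Fin 2 → ℝ => R.mulVec x) := by
    funext x
    have h1 : ((0 : EuclideanSpace ℝ (Fin 2)) + Matrix.toEuclideanLin B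
          ((MeasurableEquiv.toLp 2 (Fin 2 → ℝ)) x))
        = (WithLp.equiv 2 (Fin 2 → ℝ)).symm (B *ᵥ x) := by
      rw [zero_add]; rfl
    simp only [Function.comp_apply, h1, WithLp.equiv_symm_apply, PiLp.toLp_apply, hh'def, he2def,
      MeasurableEquiv.piFinTwo_apply]
    refine Prod.ext ?_ ?_
    · simp only [Matrix.mulVec, dotProduct, Fin.sum_univ_two, hRdef, hBsym,
        Matrix.of_apply, Matrix.cons_val', Matrix.cons_val_zero, Matrix.cons_val_one,
        Matrix.head_cons, Matrix.empty_val', Matrix.cons_val_fin_one, Matrix.head_fin_const]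
      rfl
    · simp only [Matrix.mulVec, dotProduct, Fin.sum_univ_two, hRdef, hBsym,
        Matrix.of_apply, Matrix.cons_val', Matrix.cons_val_zero, Matrix.cons_val_one,
        Matrix.head_cons, Matrix.empty_val', Matrix.cons_val_fin_one, Matrix.head_fin_const]
      field_simp
      ring
  -- the joint law
  have hjoint : P.map (fun ω => ((fun ω => W ω 1) ω, (fun ω => W ω 0) ω))
      = gaussianReal 0 1 ⊗ₘ gaussKer ρ hv := by
    calc P.map (fun ω => ((fun ω => W ω 1) ω, (fun ω => W ω 0) ω))
        = (P.map W).map (fun w : EuclideanSpace ℝ (Fin 2) => (w 1, w 0)) :=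
          (Measure.map_map hcoord hW).symm
      _ = (Measure.map (fun x : EuclideanSpace ℝ (Fin 2) =>
              (0 : EuclideanSpace ℝ (Fin 2)) + Matrix.toEuclideanLin B x)
            (Measure.map (MeasurableEquiv.toLp 2 (Fin 2 → ℝ)) ν)).map
              (fun w : EuclideanSpace ℝ (Fin 2) => (w 1, w 0)) := by
          rw [hlaw, _root_.multivariateGaussian]
      _ = ν.map ((fun w : EuclideanSpace ℝ (Fin 2) => (w 1, w 0))
            ∘ ((fun x : EuclideanSpace ℝ (Fin 2) =>
                (0 : EuclideanSpace ℝ (Fin 2)) + Matrix.toEuclideanLin B x)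
              ∘ ⇑(MeasurableEquiv.toLp 2 (Fin 2 → ℝ)))) := by
          rw [Measure.map_map hAmeas (MeasurableEquiv.measurable _),
            Measure.map_map hcoord (hAmeas.comp (MeasurableEquiv.measurable _))]
      _ = ν.map (h' ∘ (⇑e2 ∘ fun x : Fin 2 → ℝ => R.mulVec x)) := by rw [hcomp]
      _ = (ν.map (⇑e2 ∘ fun x : Fin 2 → ℝ => R.mulVec x)).map h' :=
          (Measure.map_map hh'meas (e2.measurable.comp hRmeas)).symm
      _ = ((gaussianReal 0 1).prod (gaussianReal 0 1)).map h' := by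
          rw [← Measure.map_map e2.measurable hRmeas, hνdef, map_mulVec_pi_gauss hR, he2def,
            (measurePreserving_piFinTwo fun _ : Fin 2 => gaussianReal 0 1).map_eq]
      _ = gaussianReal 0 1 ⊗ₘ gaussKer ρ hv := map_affine_prod_eq_compProd hv hσv
  have hmapY : P.map (fun ω => W ω 1) = gaussianReal 0 1 := by
    have h1 := Measure.fst_map_prodMk (μ := P) (X := fun ω => W ω 1)
      (Y := fun ω => W ω 0) hXmeas
    rw [hjoint] at h1
    rw [← h1, Measure.fst_compProd]
  have hcd := condDistrib_ae_eq_of_measure_eq_compProd (μ := P) (κ := gaussKer ρ hv)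
    (fun ω => W ω 1) hXmeas.aemeasurable (by rw [hjoint, hmapY])
  rw [hmapY] at hcd ⊢
  filter_upwards [hcd] with y hy
  rw [hy, gaussKer_apply]
end
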